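/- Let b, c, ν, ρ ∈ ℂ with Re(ρ) > 0, Re(c) > 1 and Re(ν) > -1. Then for every real x > 0, d/dx [ x^{ν+1} · d/dx ( x^{-ν} · G_ν^{(b,c-1)}(x;ρ) ) ] = -b(c-1) · G_{ν+1}^{(b,c)}(x;ρ), where the derivatives are with respect to the real variable x and x^{ν+1}, x^{-ν} are principal complex powers of the positive real x. -/

import Mathlib

open Complex MeasureTheory Real Set

/-- Extended Gamma function `Γ_ρ(x) = ∫_0^∞ t^(x-1) e^(-t-ρ/t) dt`. -/
noncomputable def extGamma (ρ x : ℂ) : ℂ :=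
  ∫ t in Ioi (0:ℝ), (t:ℂ) ^ (x - 1) * Complex.exp (-(t:ℂ) - ρ / (t:ℂ))

/-- Generalized Pochhammer symbol `(c;ρ)_μ = Γ_ρ(c+μ)/Γ(c)`. -/
noncomputable def genPoch (c ρ μ : ℂ) : ℂ := extGamma ρ (c + μ) / Complex.Gamma c

/-- Unified four parameter Bessel function `G_ν^{(b,c)}(z;ρ)` with complex order,
powers being principal complex powers. -/
noncomputable def unifiedG (b c ν ρ z : ℂ) : ℂ :=
  ∑' k : ℕ, (-b) ^ k * genPoch c ρ (2 * (k:ℂ) + ν) * (z / 2) ^ (2 * (k:ℂ) + ν) /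
    ((k.factorial : ℂ) * Complex.Gamma (ν + (k:ℂ) + 1) * Complex.Gamma (ν + 2 * (k:ℂ) + 1))

/-- Unified four parameter Bessel function with integer order, powers being integer powers. -/
noncomputable def unifiedGInt (b c ρ : ℂ) (ν : ℤ) (z : ℂ) : ℂ :=
  ∑' k : ℕ, (-b) ^ k * genPoch c ρ (2 * (k:ℂ) + (ν:ℂ)) * (z / 2) ^ (2 * (k:ℤ) + ν) /
    ((k.factorial : ℂ) * Complex.Gamma ((ν:ℂ) + (k:ℂ) + 1) * Complex.Gamma ((ν:ℂ) + 2 * (k:ℂ) + 1))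

/-- Pochhammer symbol `(a)_k = Γ(a+k)/Γ(a)`. -/
noncomputable def poch (a : ℂ) (k : ℕ) : ℂ := Complex.Gamma (a + (k:ℂ)) / Complex.Gamma a

/-- Generalized hypergeometric function `₀F₃`. -/
noncomputable def hyp0F3 (a₁ a₂ a₃ w : ℂ) : ℂ :=
  ∑' k : ℕ, w ^ k / (poch a₁ k * poch a₂ k * poch a₃ k * (k.factorial : ℂ))

/-- Generalized hypergeometric function `₂F₃`. -/
noncomputable def hyp2F3 (a₁ a₂ b₁ b₂ b₃ w : ℂ) : ℂ :=
  ∑' k : ℕ, poch a₁ k * poch a₂ k * w ^ k /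
    (poch b₁ k * poch b₂ k * poch b₃ k * (k.factorial : ℂ))

/-- Bessel function of the first kind `J_μ(z)` for real `z > 0`. -/
noncomputable def besselJ (μ : ℂ) (z : ℝ) : ℂ :=
  ∑' k : ℕ, (-1) ^ k * ((z:ℂ) / 2) ^ (2 * (k:ℂ) + μ) /
    ((k.factorial : ℂ) * Complex.Gamma (μ + (k:ℂ) + 1))

/-- Generalized four parameter spherical Bessel function
`g_ν^{(b,c)}(z;ρ) = √(π/(2z)) · G_{ν+1/2}^{(b,c-1/2)}(z;ρ)`. -/
noncomputable def sphG (b c ν ρ : ℂ) (z : ℝ) : ℂ :=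
  (Real.sqrt (π / (2 * z)) : ℂ) * unifiedG b (c - 1/2) (ν + 1/2) ρ (z:ℂ)

/-- Generalized four parameter Bessel-Clifford function
`C_ν^{(b,λ)}(z;ρ) = z^{-ν/2} · G_ν^{(b,λ)}(2√z;ρ)` for real `z > 0`. -/
noncomputable def cliffC (b lam ν ρ : ℂ) (z : ℝ) : ℂ :=
  (z:ℂ) ^ (-ν / 2) * unifiedG b lam ν ρ ((2 * Real.sqrt z : ℝ) : ℂ)

/-- coefficient sequence -/
noncomputable def dd (b c ν ρ : ℂ) (k : ℕ) : ℂ :=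
  (-b)^k * genPoch (c-1) ρ (2*(k:ℂ)+ν) /
    ((2:ℂ)^ν * 4^k * (k.factorial:ℂ) * Complex.Gamma (ν+(k:ℂ)+1) * Complex.Gamma (ν+2*(k:ℂ)+1))

noncomputable def QQ (v : ℝ) (n : ℕ) : ℝ := ∏ j ∈ Finset.range n, (v + j)

noncomputable def WW (a v : ℝ) (k : ℕ) : ℝ :=
  Real.Gamma (a + 2*k) / ((k.factorial : ℝ) * QQ v k * QQ v (2*k))

lemma QQ_pos {v : ℝ} (hv : 0 < v) (n : ℕ) : 0 < QQ v n :=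
  Finset.prod_pos (fun j _ => by positivity)

lemma WW_pos {a v : ℝ} (ha : 0 < a) (hv : 0 < v) (k : ℕ) : 0 < WW a v k := by
  have h1 : 0 < a + 2*k := by positivity
  have h2 := QQ_pos hv k
  have h3 := QQ_pos hv (2*k)
  have h4 : (0:ℝ) < (k.factorial : ℝ) := by exact_mod_cast k.factorial_pos
  have := Real.Gamma_pos_of_pos h1
  exact div_pos this (by positivity)

lemma norm_dd (b c ν ρ : ℂ) (m : ℕ) :
    ‖dd b c ν ρ m‖ = ‖b‖^m * ‖extGamma ρ ((c-1) + (2*(m:ℂ)+ν))‖ /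
      (‖Complex.Gamma (c-1)‖ * ((2:ℝ)^ν.re * 4^m * (m.factorial:ℝ) *
        ‖Complex.Gamma (ν+(m:ℂ)+1)‖ * ‖Complex.Gamma (ν+2*(m:ℂ)+1)‖)) := by
  have h2 : ‖(2:ℂ)^ν‖ = (2:ℝ)^ν.re := by
    rw [show (2:ℂ) = ((2:ℝ):ℂ) by norm_num,
      Complex.norm_cpow_eq_rpow_re_of_pos two_pos]
  have h4 : ‖(4:ℂ)^m‖ = (4:ℝ)^m := by
    rw [norm_pow]
    norm_num
  have hfac : ‖((m.factorial:ℕ):ℂ)‖ = (m.factorial:ℝ) := by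
    rw [Complex.norm_natCast]
  rw [dd, genPoch]
  rw [norm_div, norm_mul, norm_div, norm_pow, norm_neg, norm_mul, norm_mul, norm_mul, norm_mul,
    h2, h4, hfac]
  ring




lemma gammaC_ne_zero {z : ℂ} (hz : 0 < z.re) : Complex.Gamma z ≠ 0 := by
  apply Complex.Gamma_ne_zero
  intro m h
  rw [h] at hz
  simp only [Complex.neg_re, Complex.natCast_re] at hz
  have : (0:ℝ) ≤ m := Nat.cast_nonneg m
  linarith

lemma normExtGamma_le {ρ : ℂ} (hρ : 0 < ρ.re) {w : ℂ} (hw : 0 < w.re) :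
    ‖extGamma ρ w‖ ≤ Real.Gamma w.re := by
  rw [Real.Gamma_eq_integral hw, extGamma]
  refine le_trans (norm_integral_le_integral_norm _) ?_
  refine integral_mono_of_nonneg (Filter.Eventually.of_forall fun t => norm_nonneg _)
    (Real.GammaIntegral_convergent hw) ?_
  rw [Filter.EventuallyLE, ae_restrict_iff' measurableSet_Ioi]
  refine Filter.Eventually.of_forall fun t ht => ?_
  have ht' : (0:ℝ) < t := ht
  rw [norm_mul, Complex.norm_exp,
    Complex.norm_cpow_eq_rpow_re_of_pos ht']
  have hre : (-(t:ℂ) - ρ / (t:ℂ)).re = -t - ρ.re / t := by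
    simp [Complex.sub_re, Complex.neg_re, Complex.div_ofReal_re]
  rw [hre, Complex.sub_re, Complex.one_re]
  have h1 : Real.exp (-t - ρ.re / t) ≤ Real.exp (-t) := by
    apply Real.exp_le_exp.2
    have : 0 < ρ.re / t := div_pos hρ ht'
    linarith
  calc t ^ (w.re - 1) * Real.exp (-t - ρ.re / t)
      ≤ t ^ (w.re - 1) * Real.exp (-t) := by
        exact mul_le_mul_of_nonneg_left h1 (Real.rpow_nonneg ht'.le _)
    _ = Real.exp (-t) * t ^ (w.re - 1) := by ring

lemma norm_Gamma_prod_le (z : ℂ) (hz : 0 < z.re) (k : ℕ) :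
    ‖Complex.Gamma z‖ * ∏ j ∈ Finset.range k, (z.re + j) ≤ ‖Complex.Gamma (z + k)‖ := by
  induction k with
  | zero => simp
  | succ n ih =>
    have hzn : z + n ≠ 0 := by
      intro h
      have : (z + n).re = 0 := by rw [h]; simp
      simp only [Complex.add_re, Complex.natCast_re] at this
      have : (0:ℝ) ≤ n := Nat.cast_nonneg n
      linarith [this]
    have hG : Complex.Gamma (z + (n+1 : ℕ)) = (z + n) * Complex.Gamma (z + n) := by
      rw [show (z + (n+1:ℕ) : ℂ) = (z + n) + 1 by push_cast; ring, Complex.Gamma_add_one _ hzn]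
    rw [hG, Finset.prod_range_succ, norm_mul]
    have h1 : z.re + n ≤ ‖(z + (n:ℂ))‖ := by
      have := Complex.abs_re_le_norm (z + n)
      have hre : (z + (n:ℂ)).re = z.re + n := by simp
      calc z.re + n = (z + (n:ℂ)).re := hre.symm
        _ ≤ |(z + (n:ℂ)).re| := le_abs_self _
        _ ≤ ‖z + n‖ := this
    calc ‖Complex.Gamma z‖ * ((∏ j ∈ Finset.range n, (z.re + j)) * (z.re + n))
        = (‖Complex.Gamma z‖ * ∏ j ∈ Finset.range n, (z.re + j)) * (z.re + n) := by ring
      _ ≤ ‖Complex.Gamma (z + n)‖ * ‖(z + (n:ℂ))‖ := by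
          apply mul_le_mul ih h1 (by positivity) (norm_nonneg _)
      _ = ‖(z + (n:ℂ))‖ * ‖Complex.Gamma (z + n)‖ := by ring

lemma hasDerivAt_cpow_ofReal {x : ℝ} (hx : 0 < x) {μ : ℂ} (hμ : μ ≠ 0) :
    HasDerivAt (fun y : ℝ => (y:ℂ)^μ) (μ * (x:ℂ)^(μ-1)) x := by
  have hr : μ - 1 ≠ -1 := by
    intro h
    apply hμ
    have := congrArg (· + 1) h
    simpa using this
  have h := (hasDerivAt_ofReal_cpow_const' hx.ne' hr).const_mul μ
  have heq : (fun y : ℝ => μ * ((y:ℂ) ^ (μ - 1 + 1) / (μ - 1 + 1))) = fun y : ℝ => (y:ℂ)^μ := by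
    funext y
    rw [show μ - 1 + 1 = μ by ring]
    field_simp
  rw [heq] at h
  exact h

lemma half_cpow {w : ℝ} (hw : 0 < w) (μ : ℂ) :
    ((w:ℂ)/2)^μ = (w:ℂ)^μ * ((2:ℂ)^μ)⁻¹ := by
  have h1 : ((w:ℂ)/2) = ((w:ℝ):ℂ) * (((2:ℝ)⁻¹:ℝ):ℂ) := by push_cast; ring
  rw [h1, Complex.mul_cpow_ofReal_nonneg hw.le (by norm_num)]
  congr 1
  have h2 : (((2:ℝ)⁻¹:ℝ):ℂ) = ((2:ℂ))⁻¹ := by push_cast; ring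
  rw [h2, Complex.inv_cpow]
  rw [show ((2:ℂ)) = ((2:ℝ):ℂ) by push_cast; ring, Complex.arg_ofReal_of_nonneg (by norm_num)]
  exact Real.pi_ne_zero.symm


lemma summable_master (a v S : ℝ) (hv : 0 < v) (hS : 0 ≤ S) :
    Summable (fun k : ℕ => Real.Gamma (a + 2*k) * S^k /
      ((k.factorial : ℝ) * (∏ j ∈ Finset.range k, (v+j)) * (∏ j ∈ Finset.range (2*k), (v+j)))) := by
  set Q : ℕ → ℝ := fun n => ∏ j ∈ Finset.range n, (v+j) with hQdef
  have hQ : ∀ n, 0 < Q n := fun n => Finset.prod_pos (fun j _ => by positivity)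
  set V : ℕ → ℝ := fun k => Real.Gamma (a + 2*k) * S^k / ((k.factorial : ℝ) * Q k * Q (2*k)) with hVdef
  apply summable_of_ratio_norm_eventually_le (r := 1/2) (by norm_num)
  rw [Filter.eventually_atTop]
  refine ⟨max 6 (⌈|a|⌉₊ + ⌈S⌉₊ + 1), fun k hk => ?_⟩
  have hk6 : (6:ℝ) ≤ k := by
    have := le_trans (le_max_left 6 _) hk
    exact_mod_cast this
  have hka : |a| + 1 ≤ (k:ℝ) := by
    have h1 : ⌈|a|⌉₊ + 1 ≤ k := by
      have := le_trans (le_max_right 6 _) hk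
      omega
    have h2 : |a| ≤ (⌈|a|⌉₊ : ℝ) := Nat.le_ceil _
    have h3 : ((⌈|a|⌉₊ + 1 : ℕ) : ℝ) ≤ k := by exact_mod_cast h1
    push_cast at h3
    linarith
  have hkS : S ≤ (k:ℝ) := by
    have h1 : ⌈S⌉₊ ≤ k := by
      have := le_trans (le_max_right 6 _) hk
      omega
    have h2 : S ≤ (⌈S⌉₊ : ℝ) := Nat.le_ceil _
    have h3 : ((⌈S⌉₊ : ℕ) : ℝ) ≤ k := by exact_mod_cast h1
    linarith
  have hkpos : (0:ℝ) < k := by linarith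
  have hapos : 0 < a + 2*k := by
    have : -(k:ℝ) ≤ a := by
      have := neg_abs_le a
      linarith
    linarith
  have ha1 : a + 2*k ≠ 0 := ne_of_gt hapos
  have ha2 : a + 2*k + 1 ≠ 0 := by positivity
  -- recurrences
  have hGam : Real.Gamma (a + 2*(k+1:ℕ)) = (a+2*k+1) * ((a+2*k) * Real.Gamma (a + 2*k)) := by
    push_cast
    rw [show a + 2*((k:ℝ)+1) = (a+2*k+1)+1 by ring, Real.Gamma_add_one ha2,
      show a + 2*(k:ℝ)+1 = (a+2*k)+1 by ring, Real.Gamma_add_one ha1]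
  have hQk : Q (k+1) = Q k * (v + k) := Finset.prod_range_succ _ _
  have hQ2k : Q (2*(k+1)) = Q (2*k) * ((v + 2*k) * (v + (2*k+1))) := by
    show (∏ j ∈ Finset.range (2*(k+1)), (v+(j:ℝ))) = (∏ j ∈ Finset.range (2*k), (v+(j:ℝ))) * ((v+2*(k:ℝ)) * (v+(2*(k:ℝ)+1)))
    rw [show 2*(k+1) = (2*k+1)+1 by ring]
    rw [Finset.prod_range_succ, Finset.prod_range_succ]
    push_cast
    ring
  have hGpos : 0 < Real.Gamma (a + 2*k) := Real.Gamma_pos_of_pos hapos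
  have hVk : 0 ≤ V k := by
    have : (0:ℝ) < (k.factorial : ℝ) * Q k * Q (2*k) := by
      have := hQ k; have := hQ (2*k)
      have : (0:ℝ) < (k.factorial : ℝ) := by exact_mod_cast k.factorial_pos
      positivity
    apply div_nonneg (by positivity) this.le
  have hfac : ((k+1).factorial : ℝ) = ((k:ℝ)+1) * (k.factorial : ℝ) := by
    rw [Nat.factorial_succ]; push_cast; ring
  have key : V (k+1) = (S * (a+2*k) * (a+2*k+1) / (((k:ℝ)+1) * (v+k) * ((v+2*k) * (v+(2*k+1))))) * V k := by
    rw [hVdef]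
    simp only
    rw [hGam, hQk, hQ2k, hfac]
    have hQkne := (hQ k).ne'
    have hQ2kne := (hQ (2*k)).ne'
    have hfne : ((k.factorial : ℝ)) ≠ 0 := by
      have : (0:ℝ) < (k.factorial : ℝ) := by exact_mod_cast k.factorial_pos
      exact this.ne'
    have h1 : ((k:ℝ)+1) ≠ 0 := by positivity
    have h2 : (v+(k:ℝ)) ≠ 0 := by positivity
    have h3 : (v+2*(k:ℝ)) ≠ 0 := by positivity
    have h4 : (v+(2*(k:ℝ)+1)) ≠ 0 := by positivity
    push_cast
    field_simp
    ring
  have hratio : S * (a+2*k) * (a+2*k+1) / (((k:ℝ)+1) * (v+k) * ((v+2*k) * (v+(2*k+1)))) ≤ 1/2 := by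
    rw [div_le_iff₀ (by positivity)]
    have b1 : a + 2*k ≤ 3*k := by
      have := le_abs_self a
      linarith
    have b2 : a + 2*k + 1 ≤ 4*k := by
      have := le_abs_self a
      linarith
    have c1 : (k:ℝ) ≤ (k:ℝ)+1 := by linarith
    have c2 : (k:ℝ) ≤ v+k := by linarith
    have c3 : 2*(k:ℝ) ≤ v+2*k := by linarith
    have c4 : 2*(k:ℝ) ≤ v+(2*k+1) := by linarith
    have h24 : S * (a+2*k) * (a+2*k+1) ≤ (k:ℝ) * (3*k) * (4*k) := by
      apply mul_le_mul
      · apply mul_le_mul hkS b1 (by positivity) (by positivity)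
      · exact b2
      · positivity
      · positivity
    have h25 : (k:ℝ) * (3*k) * (4*k) ≤ 1/2 * (((k:ℝ)+1) * (v+k) * ((v+2*k) * (v+(2*k+1)))) := by
      have e1 : ((k:ℝ)+1) * (v+k) * ((v+2*k) * (v+(2*k+1))) ≥ (k:ℝ) * k * (2*k * (2*k)) := by
        apply mul_le_mul
        · apply mul_le_mul c1 c2 (by positivity) (by positivity)
        · apply mul_le_mul c3 c4 (by positivity) (by positivity)
        · positivity
        · positivity
      have e4 : 0 ≤ 2*(k:ℝ)^3*((k:ℝ)-6) := mul_nonneg (by positivity) (by linarith)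
      nlinarith [e1, e4]
    linarith
  rw [key]
  rw [norm_mul, Real.norm_eq_abs, Real.norm_eq_abs]
  have habs : |S * (a+2*k) * (a+2*k+1) / (((k:ℝ)+1) * (v+k) * ((v+2*k) * (v+(2*k+1))))| ≤ 1/2 := by
    have hnum : |S * (a+2*k) * (a+2*k+1)| = S * (a+2*k) * (a+2*k+1) :=
      _root_.abs_of_nonneg (mul_nonneg (mul_nonneg hS hapos.le) (by linarith))
    have hden : |((k:ℝ)+1) * (v+k) * ((v+2*k) * (v+(2*k+1)))| = ((k:ℝ)+1) * (v+k) * ((v+2*k) * (v+(2*k+1))) :=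
      _root_.abs_of_nonneg (by positivity)
    rw [abs_div, hnum, hden]
    exact hratio
  calc |S * (a+2*k) * (a+2*k+1) / (((k:ℝ)+1) * (v+k) * ((v+2*k) * (v+(2*k+1))))| * |V k|
      ≤ 1/2 * |V k| := mul_le_mul_of_nonneg_right habs (abs_nonneg _)

lemma dd_succ_le (b c ν ρ : ℂ) (hρ : 0 < ρ.re) (hc : 1 < c.re) (hν : -1 < ν.re) (k : ℕ) :
    ‖dd b c ν ρ (k+1)‖ ≤
      (‖b‖ / (‖Complex.Gamma (c-1)‖ * (2:ℝ)^ν.re * ‖Complex.Gamma (ν+1)‖^2 * (ν.re+1)^3)) *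
      (‖b‖^k * WW (c.re+1+ν.re) (ν.re+1) k) := by
  set v : ℝ := ν.re + 1 with hvdef
  clear_value v
  have hv : 0 < v := by rw [hvdef]; linarith
  have hν1 : 0 < (ν+1).re := by simp [Complex.add_re, Complex.one_re]; linarith
  have hΓc1 : 0 < ‖Complex.Gamma (c-1)‖ := by
    rw [norm_pos_iff]
    apply gammaC_ne_zero
    simp [Complex.sub_re, Complex.one_re]; linarith
  have hΓν1 : 0 < ‖Complex.Gamma (ν+1)‖ := by
    rw [norm_pos_iff]; exact gammaC_ne_zero hν1
  have ht2 : (0:ℝ) < (2:ℝ)^ν.re := Real.rpow_pos_of_pos two_pos _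
  -- extGamma bound
  have harg : ((c-1) + (2*((k+1:ℕ):ℂ)+ν)).re = (c.re+1+ν.re) + 2*k := by
    push_cast
    simp [Complex.add_re, Complex.sub_re, Complex.mul_re, Complex.one_re, Complex.natCast_re,
      Complex.natCast_im]
    ring
  have hargpos : 0 < ((c-1) + (2*((k+1:ℕ):ℂ)+ν)).re := by
    rw [harg]
    have : (0:ℝ) ≤ k := Nat.cast_nonneg k
    linarith
  have hE : ‖extGamma ρ ((c-1) + (2*((k+1:ℕ):ℂ)+ν))‖ ≤ Real.Gamma ((c.re+1+ν.re) + 2*k) := by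
    have := normExtGamma_le hρ hargpos
    rwa [harg] at this
  -- Gamma lower bounds
  have hg1 : ‖Complex.Gamma (ν+1)‖ * QQ v (k+1) ≤ ‖Complex.Gamma (ν+((k+1:ℕ):ℂ)+1)‖ := by
    have h := norm_Gamma_prod_le (ν+1) hν1 (k+1)
    have e1 : (∏ j ∈ Finset.range (k+1), ((ν+1).re + j)) = QQ v (k+1) := by
      apply Finset.prod_congr rfl
      intro j _
      simp [QQ, Complex.add_re, Complex.one_re, hvdef]
    have e2 : Complex.Gamma ((ν+1) + ((k+1:ℕ):ℂ)) = Complex.Gamma (ν+((k+1:ℕ):ℂ)+1) := by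
      congr 1; ring
    rw [e1, e2] at h
    exact h
  have hg2 : ‖Complex.Gamma (ν+1)‖ * QQ v (2*(k+1)) ≤ ‖Complex.Gamma (ν+2*((k+1:ℕ):ℂ)+1)‖ := by
    have h := norm_Gamma_prod_le (ν+1) hν1 (2*(k+1))
    have e1 : (∏ j ∈ Finset.range (2*(k+1)), ((ν+1).re + j)) = QQ v (2*(k+1)) := by
      apply Finset.prod_congr rfl
      intro j _
      simp [QQ, Complex.add_re, Complex.one_re, hvdef]
    have e2 : Complex.Gamma ((ν+1) + ((2*(k+1):ℕ):ℂ)) = Complex.Gamma (ν+2*((k+1:ℕ):ℂ)+1) := by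
      congr 1; push_cast; ring
    rw [e1, e2] at h
    exact h
  have hQk := QQ_pos hv k
  have hQ2k := QQ_pos hv (2*k)
  have hQk1 := QQ_pos hv (k+1)
  have hQ2k2 := QQ_pos hv (2*(k+1))
  have hfacpos : (0:ℝ) < (k.factorial : ℝ) := by exact_mod_cast k.factorial_pos
  have hfac1pos : (0:ℝ) < ((k+1).factorial : ℝ) := by exact_mod_cast (k+1).factorial_pos
  -- QQ recursions
  have hQQk : QQ v k * v ≤ QQ v (k+1) := by
    simp only [QQ, Finset.prod_range_succ]
    have hk0 : (0:ℝ) ≤ (k:ℝ) := Nat.cast_nonneg k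
    have h1 : v ≤ v + k := by linarith
    exact mul_le_mul_of_nonneg_left h1 (le_of_lt (Finset.prod_pos fun j _ => by positivity))
  have hQQ2k : QQ v (2*k) * (v*v) ≤ QQ v (2*(k+1)) := by
    have e : 2*(k+1) = (2*k)+1+1 := by ring
    simp only [QQ]
    rw [e, Finset.prod_range_succ, Finset.prod_range_succ]
    push_cast
    have hk0 : (0:ℝ) ≤ (k:ℝ) := Nat.cast_nonneg k
    have hp : (0:ℝ) ≤ ∏ j ∈ Finset.range (2*k), (v + (j:ℝ)) :=
      le_of_lt (Finset.prod_pos fun j _ => by positivity)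
    have h1 : v*v ≤ (v+2*(k:ℝ))*(v+(2*(k:ℝ)+1)) := by nlinarith
    nlinarith [mul_le_mul_of_nonneg_left h1 hp]
  -- main computation
  rw [norm_dd]
  have hn1pos : 0 < ‖Complex.Gamma (ν+((k+1:ℕ):ℂ)+1)‖ :=
    lt_of_lt_of_le (by positivity) hg1
  have hn2pos : 0 < ‖Complex.Gamma (ν+2*((k+1:ℕ):ℂ)+1)‖ :=
    lt_of_lt_of_le (by positivity) hg2
  have hfacmono : (k.factorial : ℝ) ≤ ((k+1).factorial : ℝ) := by
    exact_mod_cast Nat.factorial_le (Nat.le_succ k)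
  have h4pow : (1:ℝ) ≤ (4:ℝ)^(k+1) := one_le_pow₀ (by norm_num)
  have hgn1 : ‖Complex.Gamma (ν+1)‖ * (QQ v k * v) ≤ ‖Complex.Gamma (ν+((k+1:ℕ):ℂ)+1)‖ :=
    le_trans (mul_le_mul_of_nonneg_left hQQk hΓν1.le) hg1
  have hgn2 : ‖Complex.Gamma (ν+1)‖ * (QQ v (2*k) * (v*v)) ≤ ‖Complex.Gamma (ν+2*((k+1:ℕ):ℂ)+1)‖ :=
    le_trans (mul_le_mul_of_nonneg_left hQQ2k hΓν1.le) hg2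
  have hDlow : ‖Complex.Gamma (c-1)‖ * ((2:ℝ)^ν.re * 1 * (k.factorial:ℝ) *
        (‖Complex.Gamma (ν+1)‖ * (QQ v k * v)) * (‖Complex.Gamma (ν+1)‖ * (QQ v (2*k) * (v*v))))
      ≤ ‖Complex.Gamma (c-1)‖ * ((2:ℝ)^ν.re * 4^(k+1) * (((k+1).factorial):ℝ) *
        ‖Complex.Gamma (ν+((k+1:ℕ):ℂ)+1)‖ * ‖Complex.Gamma (ν+2*((k+1:ℕ):ℂ)+1)‖) := by
    gcongr <;> first | exact h4pow | exact hgn1 | exact hgn2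
  have hDlowpos : 0 < ‖Complex.Gamma (c-1)‖ * ((2:ℝ)^ν.re * 1 * (k.factorial:ℝ) *
        (‖Complex.Gamma (ν+1)‖ * (QQ v k * v)) * (‖Complex.Gamma (ν+1)‖ * (QQ v (2*k) * (v*v)))) := by
    positivity
  have hGpos : 0 < Real.Gamma ((c.re+1+ν.re) + 2*k) := by
    apply Real.Gamma_pos_of_pos
    have : (0:ℝ) ≤ k := Nat.cast_nonneg k
    linarith
  have hnum : ‖b‖^(k+1) * ‖extGamma ρ ((c-1) + (2*((k+1:ℕ):ℂ)+ν))‖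
      ≤ ‖b‖^(k+1) * Real.Gamma ((c.re+1+ν.re) + 2*k) := by
    apply mul_le_mul_of_nonneg_left hE (by positivity)
  calc ‖b‖^(k+1) * ‖extGamma ρ ((c-1) + (2*((k+1:ℕ):ℂ)+ν))‖ /
      (‖Complex.Gamma (c-1)‖ * ((2:ℝ)^ν.re * 4^(k+1) * (((k+1).factorial):ℝ) *
        ‖Complex.Gamma (ν+((k+1:ℕ):ℂ)+1)‖ * ‖Complex.Gamma (ν+2*((k+1:ℕ):ℂ)+1)‖))
      ≤ (‖b‖^(k+1) * Real.Gamma ((c.re+1+ν.re) + 2*k)) /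
      (‖Complex.Gamma (c-1)‖ * ((2:ℝ)^ν.re * 1 * (k.factorial:ℝ) *
        (‖Complex.Gamma (ν+1)‖ * (QQ v k * v)) * (‖Complex.Gamma (ν+1)‖ * (QQ v (2*k) * (v*v))))) := by
        apply div_le_div₀ (by positivity) hnum hDlowpos hDlow
    _ = (‖b‖ / (‖Complex.Gamma (c-1)‖ * (2:ℝ)^ν.re * ‖Complex.Gamma (ν+1)‖^2 * v^3)) *
      (‖b‖^k * WW (c.re+1+ν.re) v k) := by
        rw [WW]
        ring

noncomputable def ffk (b c ν ρ : ℂ) (k : ℕ) (w : ℝ) : ℂ := dd b c ν ρ k * (w:ℂ)^(2*k)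

noncomputable def ffk' (b c ν ρ : ℂ) (k : ℕ) (y : ℝ) : ℂ :=
  dd b c ν ρ k * (((2*k:ℕ):ℂ) * (y:ℂ)^(2*k-1))

noncomputable def ggk (b c ν ρ : ℂ) (k : ℕ) (y : ℝ) : ℂ :=
  dd b c ν ρ (k+1) * (2*(k:ℂ)+2) * (y:ℂ)^(2*(k:ℂ)+ν+2)

noncomputable def ggk' (b c ν ρ : ℂ) (k : ℕ) (y : ℝ) : ℂ :=
  dd b c ν ρ (k+1) * (2*(k:ℂ)+2) * ((2*(k:ℂ)+ν+2) * (y:ℂ)^(2*(k:ℂ)+ν+1))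

lemma claimA (b c ν ρ : ℂ) {w : ℝ} (hw : 0 < w) :
    (w:ℂ)^(-ν) * unifiedG b (c-1) ν ρ (w:ℂ) = ∑' k : ℕ, ffk b c ν ρ k w := by
  rw [unifiedG, ← tsum_mul_left]
  apply tsum_congr
  intro k
  have hwc : (w:ℂ) ≠ 0 := Complex.ofReal_ne_zero.2 hw.ne'
  have e1 : ((w:ℂ)/2)^(2*(k:ℂ)+ν) = ((w:ℂ)^(2*k) * (w:ℂ)^ν) * ((4:ℂ)^k * (2:ℂ)^ν)⁻¹ := by
    rw [half_cpow hw]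
    congr 1
    · rw [Complex.cpow_add _ _ hwc]
      congr 1
      rw [show (2*(k:ℂ)) = ((2*k:ℕ):ℂ) by push_cast; ring, Complex.cpow_natCast]
    · congr 1
      rw [Complex.cpow_add _ _ two_ne_zero]
      congr 1
      rw [show (2*(k:ℂ)) = ((2*k:ℕ):ℂ) by push_cast; ring, Complex.cpow_natCast, pow_mul]
      norm_num
  rw [e1, ffk, dd]
  have hcancel : (w:ℂ)^(-ν) * (w:ℂ)^ν = 1 := by
    rw [← Complex.cpow_add _ _ hwc, neg_add_cancel, Complex.cpow_zero]
  have expand : (w:ℂ)^(-ν) * ((-b)^k * genPoch (c-1) ρ (2*(k:ℂ)+ν) *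
      (((w:ℂ)^(2*k) * (w:ℂ)^ν) * ((4:ℂ)^k * (2:ℂ)^ν)⁻¹) /
      ((k.factorial:ℂ) * Complex.Gamma (ν+(k:ℂ)+1) * Complex.Gamma (ν+2*(k:ℂ)+1)))
      = ((w:ℂ)^(-ν) * (w:ℂ)^ν) * ((-b)^k * genPoch (c-1) ρ (2*(k:ℂ)+ν) *
      ((w:ℂ)^(2*k) * ((4:ℂ)^k * (2:ℂ)^ν)⁻¹) /
      ((k.factorial:ℂ) * Complex.Gamma (ν+(k:ℂ)+1) * Complex.Gamma (ν+2*(k:ℂ)+1))) := by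
    ring
  rw [expand, hcancel, one_mul]
  ring

set_option maxHeartbeats 2000000 in
lemma final_term (b c ν ρ : ℂ) (hc : 1 < c.re) (hν : -1 < ν.re) {x : ℝ} (hx : 0 < x) (k : ℕ) :
    ggk' b c ν ρ k x = -b*(c-1) * ((-b)^k * genPoch c ρ (2*(k:ℂ)+(ν+1)) * (((x:ℂ))/2)^(2*(k:ℂ)+(ν+1)) /
      (((k.factorial):ℂ) * Complex.Gamma ((ν+1)+(k:ℂ)+1) * Complex.Gamma ((ν+1)+2*(k:ℂ)+1))) := by
  have hμne : (2*(k:ℂ)+ν+2) ≠ 0 := by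
    intro h
    have h2 : (2*(k:ℂ)+ν+2).re = 2*(k:ℝ)+ν.re+2 := by
      simp [Complex.add_re, Complex.mul_re, Complex.natCast_re, Complex.natCast_im]
    rw [h] at h2
    simp only [Complex.zero_re] at h2
    have : (0:ℝ) ≤ (k:ℝ) := Nat.cast_nonneg k
    linarith
  have hk0 : (0:ℝ) ≤ (k:ℝ) := Nat.cast_nonneg k
  have hc1ne : (c-1) ≠ 0 := by
    intro h
    have := congrArg Complex.re h
    simp only [Complex.sub_re, Complex.one_re, Complex.zero_re] at this
    linarith
  have hΓc1ne : Complex.Gamma (c-1) ≠ 0 := by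
    apply gammaC_ne_zero
    simp only [Complex.sub_re, Complex.one_re]
    linarith
  have hΓane : Complex.Gamma (ν+(k:ℂ)+2) ≠ 0 := by
    apply gammaC_ne_zero
    simp only [Complex.add_re, Complex.natCast_re, Complex.re_ofNat]
    linarith
  have h22ne : (ν+2*(k:ℂ)+2) ≠ 0 := by
    rw [show ν+2*(k:ℂ)+2 = 2*(k:ℂ)+ν+2 by ring]
    exact hμne
  have hΓbne : Complex.Gamma (ν+2*(k:ℂ)+2) ≠ 0 := by
    apply gammaC_ne_zero
    have : (2*(k:ℂ)).re = 2*(k:ℝ) := by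
      simp [Complex.mul_re, Complex.natCast_re, Complex.natCast_im]
    simp only [Complex.add_re, Complex.re_ofNat, this]
    linarith
  have h2ν : (2:ℂ)^ν ≠ 0 := by
    simp [Complex.cpow_eq_zero_iff]
  have h4k : ((4:ℂ))^k ≠ 0 := pow_ne_zero _ (by norm_num)
  have hfk : ((k.factorial):ℂ) ≠ 0 := Nat.cast_ne_zero.2 (Nat.factorial_ne_zero k)
  have hk1 : ((k:ℂ)+1) ≠ 0 := Nat.cast_add_one_ne_zero k
  have hEarg : (c-1) + (2*((k+1:ℕ):ℂ)+ν) = c + (2*(k:ℂ)+(ν+1)) := by push_cast; ring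
  have hx2 : ((x:ℂ)/2)^(2*(k:ℂ)+(ν+1)) = (x:ℂ)^(2*(k:ℂ)+ν+1) * ((4:ℂ)^k * ((2:ℂ)^ν * 2))⁻¹ := by
    rw [half_cpow hx]
    congr 1
    · congr 1
      ring
    · congr 1
      rw [Complex.cpow_add _ _ two_ne_zero]
      congr 1
      · rw [show (2*(k:ℂ)) = ((2*k:ℕ):ℂ) by push_cast; ring, Complex.cpow_natCast, pow_mul]
        norm_num
      · rw [Complex.cpow_add _ _ two_ne_zero, Complex.cpow_one]
  have hΓc : Complex.Gamma c = (c-1) * Complex.Gamma (c-1) := by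
    have h := Complex.Gamma_add_one (c-1) hc1ne
    rw [sub_add_cancel] at h
    exact h
  have hΓshift : Complex.Gamma (ν+2*((k+1:ℕ):ℂ)+1) = (ν+2*(k:ℂ)+2) * Complex.Gamma (ν+2*(k:ℂ)+2) := by
    rw [show (ν+2*((k+1:ℕ):ℂ)+1) = (ν+2*(k:ℂ)+2)+1 by push_cast; ring,
      Complex.Gamma_add_one _ h22ne]
  have hΓ1eq : Complex.Gamma (ν+((k+1:ℕ):ℂ)+1) = Complex.Gamma (ν+(k:ℂ)+2) := by
    congr 1
    push_cast
    ring
  have hΓ1eq' : Complex.Gamma ((ν+1)+(k:ℂ)+1) = Complex.Gamma (ν+(k:ℂ)+2) := by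
    congr 1
    ring
  have hΓ2eq' : Complex.Gamma ((ν+1)+2*(k:ℂ)+1) = Complex.Gamma (ν+2*(k:ℂ)+2) := by
    congr 1
    ring
  have hfaceq : (((k+1).factorial):ℂ) = ((k:ℂ)+1)*((k.factorial):ℂ) := by
    rw [Nat.factorial_succ]
    push_cast
    ring
  rw [ggk', dd, genPoch, genPoch, hEarg, hΓshift, hΓ1eq, hΓ1eq', hΓ2eq', hfaceq, hΓc, hx2,
    pow_succ (-b) k, pow_succ (4:ℂ) k]
  rw [show 2*(k:ℂ)+ν+2 = ν+2*(k:ℂ)+2 by ring, show 2*(k:ℂ)+2 = 2*((k:ℂ)+1) by ring]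
  set A : ℂ := extGamma ρ (c + (2*(k:ℂ)+(ν+1))) with hA
  set X : ℂ := (x:ℂ)^(2*(k:ℂ)+ν+1) with hX
  set P : ℂ := (-b)^k with hP
  set t : ℂ := (2:ℂ)^ν with ht
  set q : ℂ := (4:ℂ)^k with hq
  set F : ℂ := ((k.factorial):ℂ) with hF
  set Ga : ℂ := Complex.Gamma (ν+(k:ℂ)+2) with hGa
  set Gb : ℂ := Complex.Gamma (ν+2*(k:ℂ)+2) with hGb
  set G1 : ℂ := Complex.Gamma (c-1) with hG1
  set K1 : ℂ := (k:ℂ)+1 with hK1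
  set K2 : ℂ := ν+2*(k:ℂ)+2 with hK2
  set K3 : ℂ := c-1 with hK3
  clear_value A X P t q F Ga Gb G1 K1 K2 K3
  field_simp
  have h1 : K1 * K1⁻¹ = 1 := mul_inv_cancel₀ hk1
  have h2 : K2 * K2⁻¹ = 1 := mul_inv_cancel₀ h22ne
  have h3 : K3 * K3⁻¹ = 1 := mul_inv_cancel₀ hc1ne
  linear_combination

theorem stmt9 (b c ν ρ : ℂ) (hρ : 0 < ρ.re) (hc : 1 < c.re) (hν : -1 < ν.re)
    (x : ℝ) (hx : 0 < x) :
    deriv (fun y : ℝ => (y:ℂ) ^ (ν + 1) *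
        deriv (fun w : ℝ => (w:ℂ) ^ (-ν) * unifiedG b (c - 1) ν ρ (w:ℂ)) y) x =
      -b * (c - 1) * unifiedG b c (ν + 1) ρ (x:ℂ) := by
  set R : ℝ := x + 1 with hRdef
  have hR0 : (0:ℝ) < R := by rw [hRdef]; linarith
  have hR1 : (1:ℝ) ≤ R := by rw [hRdef]; linarith
  have hxR : x < R := by rw [hRdef]; linarith
  have hxmem : x ∈ Ioo (0:ℝ) R := ⟨hx, hxR⟩
  set B : ℝ := ‖b‖ with hBdef
  have hB0 : 0 ≤ B := norm_nonneg b
  set a' : ℝ := c.re + 1 + ν.re with ha'def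
  have ha' : 0 < a' := by rw [ha'def]; linarith
  set v : ℝ := ν.re + 1 with hvdef
  have hv : 0 < v := by rw [hvdef]; linarith
  -- coefficient bound
  obtain ⟨Cd2, hCd2, hdd2⟩ : ∃ C : ℝ, 0 ≤ C ∧
      ∀ k : ℕ, ‖dd b c ν ρ (k+1)‖ ≤ C * (B^k * WW a' v k) := by
    refine ⟨‖b‖ / (‖Complex.Gamma (c-1)‖ * (2:ℝ)^ν.re * ‖Complex.Gamma (ν+1)‖^2 * (ν.re+1)^3),
      ?_, ?_⟩
    · apply div_nonneg (norm_nonneg b)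
      have h1 : (0:ℝ) < (2:ℝ)^ν.re := Real.rpow_pos_of_pos two_pos _
      have h2 : (0:ℝ) < (ν.re+1)^3 := by positivity
      positivity
    · intro k
      exact dd_succ_le b c ν ρ hρ hc hν k
  have hWpos : ∀ k, 0 < WW a' v k := WW_pos ha' hv
  have hW : ∀ S : ℝ, 0 ≤ S → Summable (fun k : ℕ => WW a' v k * S^k) := by
    intro S hS
    apply (summable_master a' v S hv hS).congr
    intro k
    rw [WW, QQ, QQ]
    ring
  have h2pow : ∀ k : ℕ, ((k:ℝ)+1) ≤ 2^k := by
    intro k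
    have h := Nat.lt_two_pow_self (n := k)
    have : ((k+1:ℕ):ℝ) ≤ ((2^k:ℕ):ℝ) := by exact_mod_cast h
    push_cast at this
    linarith
  have hone2 : ∀ k : ℕ, (1:ℝ) ≤ 2^k := fun k => one_le_pow₀ (by norm_num)
  -- inner derivative bounds
  set u : ℕ → ℝ := fun k => ‖dd b c ν ρ k‖ * (((2*k:ℕ):ℝ) * R^(2*k-1)) with hudef
  have hu : Summable u := by
    rw [← summable_nat_add_iff 1]
    apply Summable.of_nonneg_of_le (f := fun k => ((2*R)*Cd2) * (WW a' v k * (2*B*R^2)^k))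
    · intro k
      have := norm_nonneg (dd b c ν ρ (k+1))
      have h1 : (0:ℝ) ≤ ((2*(k+1):ℕ):ℝ) := Nat.cast_nonneg _
      have h2 : (0:ℝ) ≤ R^(2*(k+1)-1) := pow_nonneg hR0.le _
      simp only [hudef]
      positivity
    · intro k
      simp only [hudef]
      have hpowR : R^(2*(k+1)-1) = R*(R^2)^k := by
        rw [show 2*(k+1)-1 = 2*k+1 by omega, pow_succ, pow_mul]
        ring
      have h2k : ((2*(k+1):ℕ):ℝ) ≤ 2*2^k := by
        push_cast
        have := h2pow k
        linarith
      calc ‖dd b c ν ρ (k+1)‖ * (((2*(k+1):ℕ):ℝ) * R^(2*(k+1)-1))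
          ≤ (Cd2 * (B^k * WW a' v k)) * ((2*2^k) * (R*(R^2)^k)) := by
            rw [hpowR]
            apply mul_le_mul (hdd2 k) _ _ _
            · apply mul_le_mul h2k le_rfl (by positivity) (by positivity)
            · have : (0:ℝ) ≤ R*(R^2)^k := by positivity
              have h1 : (0:ℝ) ≤ ((2*(k+1):ℕ):ℝ) := Nat.cast_nonneg _
              positivity
            · have := hWpos k
              positivity
        _ = ((2*R)*Cd2) * (WW a' v k * (2*B*R^2)^k) := by
            rw [mul_pow, mul_pow]
            ring
    · exact (hW (2*B*R^2) (by positivity)).mul_left _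
  -- inner value summability at x
  have hS2 : Summable (fun k : ℕ => ffk b c ν ρ k x) := by
    rw [← summable_nat_add_iff 1]
    apply Summable.of_norm_bounded (g := fun k => ((R^2)*Cd2) * (WW a' v k * (B*R^2)^k))
      ((hW (B*R^2) (by positivity)).mul_left _)
    intro k
    rw [ffk]
    rw [norm_mul, norm_pow, Complex.norm_real, Real.norm_eq_abs, abs_of_pos hx]
    have hxpow : x^(2*(k+1)) ≤ R^2*(R^2)^k := by
      have h1 : x^(2*(k+1)) ≤ R^(2*(k+1)) := pow_le_pow_left₀ hx.le hxR.le _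
      have h2 : R^(2*(k+1)) = R^2*(R^2)^k := by
        rw [show 2*(k+1) = 2*k+2 by omega, pow_add, pow_mul]
        ring
      linarith
    calc ‖dd b c ν ρ (k+1)‖ * x^(2*(k+1))
        ≤ (Cd2 * (B^k * WW a' v k)) * (R^2*(R^2)^k) := by
          apply mul_le_mul (hdd2 k) hxpow (by positivity) ?_
          have := hWpos k
          positivity
      _ = ((R^2)*Cd2) * (WW a' v k * (B*R^2)^k) := by
          rw [mul_pow]
          ring
  -- inner term derivatives
  have hfder : ∀ (k : ℕ) (y : ℝ), y ∈ Ioo (0:ℝ) R →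
      HasDerivAt (ffk b c ν ρ k) (ffk' b c ν ρ k y) y := by
    intro k y _
    have h := ((hasDerivAt_pow (2*k) ((y:ℝ):ℂ)).comp_ofReal).const_mul (dd b c ν ρ k)
    rw [show ffk b c ν ρ k = fun w : ℝ => dd b c ν ρ k * (w:ℂ)^(2*k) from rfl]
    simpa [ffk'] using h
  have hfbound : ∀ (k : ℕ) (y : ℝ), y ∈ Ioo (0:ℝ) R → ‖ffk' b c ν ρ k y‖ ≤ u k := by
    intro k y hy
    rw [ffk', hudef]
    rw [norm_mul, norm_mul, Complex.norm_natCast, norm_pow, Complex.norm_real, Real.norm_eq_abs,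
      abs_of_pos hy.1]
    have h1 : y^(2*k-1) ≤ R^(2*k-1) := pow_le_pow_left₀ hy.1.le hy.2.le _
    apply mul_le_mul_of_nonneg_left _ (norm_nonneg _)
    apply mul_le_mul_of_nonneg_left h1 (Nat.cast_nonneg _)
  -- inner hasDerivAt
  have hInner : ∀ y ∈ Ioo (0:ℝ) R,
      HasDerivAt (fun z : ℝ => ∑' k : ℕ, ffk b c ν ρ k z) (∑' k : ℕ, ffk' b c ν ρ k y) y :=
    fun y hy => hasDerivAt_tsum_of_isPreconnected hu isOpen_Ioo isPreconnected_Ioo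
      hfder hfbound hxmem hS2 hy
  have hderivInner : ∀ y ∈ Ioo (0:ℝ) R,
      deriv (fun w : ℝ => (w:ℂ) ^ (-ν) * unifiedG b (c - 1) ν ρ (w:ℂ)) y
        = ∑' k : ℕ, ffk' b c ν ρ k y := by
    intro y hy
    have hev : (fun w : ℝ => (w:ℂ) ^ (-ν) * unifiedG b (c - 1) ν ρ (w:ℂ))
        =ᶠ[nhds y] (fun z : ℝ => ∑' k : ℕ, ffk b c ν ρ k z) := by
      filter_upwards [Ioi_mem_nhds hy.1] with w hw
      exact claimA b c ν ρ hw
    rw [hev.deriv_eq, (hInner y hy).deriv]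
  have hSf' : ∀ y ∈ Ioo (0:ℝ) R, Summable (fun k : ℕ => ffk' b c ν ρ k y) :=
    fun y hy => Summable.of_norm_bounded hu (fun k => hfbound k y hy)
  have hshift : ∀ y ∈ Ioo (0:ℝ) R, (∑' k : ℕ, ffk' b c ν ρ k y)
      = ∑' k : ℕ, (dd b c ν ρ (k+1) * (2*(k:ℂ)+2)) * ((y:ℂ)^(2*k+1)) := by
    intro y hy
    rw [(hSf' y hy).tsum_eq_zero_add]
    have h0 : ffk' b c ν ρ 0 y = 0 := by simp [ffk']
    rw [h0, zero_add]
    apply tsum_congr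
    intro k
    rw [ffk', show 2*(k+1)-1 = 2*k+1 by omega]
    push_cast
    ring
  have hOuterEq : ∀ y ∈ Ioo (0:ℝ) R,
      (y:ℂ) ^ (ν + 1) * deriv (fun w : ℝ => (w:ℂ) ^ (-ν) * unifiedG b (c - 1) ν ρ (w:ℂ)) y
        = ∑' k : ℕ, ggk b c ν ρ k y := by
    intro y hy
    rw [hderivInner y hy, hshift y hy, ← tsum_mul_left]
    apply tsum_congr
    intro k
    have hyc : (y:ℂ) ≠ 0 := Complex.ofReal_ne_zero.2 hy.1.ne'
    have e3 : (y:ℂ)^(ν+1) * (y:ℂ)^(2*k+1) = (y:ℂ)^(2*(k:ℂ)+ν+2) := by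
      rw [← Complex.cpow_natCast, ← Complex.cpow_add _ _ hyc]
      congr 1
      push_cast
      ring
    rw [ggk]
    calc (y:ℂ)^(ν+1) * ((dd b c ν ρ (k+1) * (2*(k:ℂ)+2)) * (y:ℂ)^(2*k+1))
        = (dd b c ν ρ (k+1) * (2*(k:ℂ)+2)) * ((y:ℂ)^(ν+1) * (y:ℂ)^(2*k+1)) := by ring
      _ = _ := by rw [e3]
  -- outer term derivatives
  have hrepos : ∀ k : ℕ, (2*(k:ℂ)+ν+2).re = 2*(k:ℝ)+ν.re+2 := by
    intro k
    simp [Complex.add_re, Complex.mul_re, Complex.natCast_re, Complex.natCast_im]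
  have hμne : ∀ k : ℕ, (2*(k:ℂ)+ν+2) ≠ 0 := by
    intro k h
    have h2 := hrepos k
    rw [h] at h2
    simp only [Complex.zero_re] at h2
    have : (0:ℝ) ≤ (k:ℝ) := Nat.cast_nonneg k
    linarith
  have hgder : ∀ (k : ℕ) (y : ℝ), y ∈ Ioo (0:ℝ) R →
      HasDerivAt (ggk b c ν ρ k) (ggk' b c ν ρ k y) y := by
    intro k y hy
    have h := (hasDerivAt_cpow_ofReal hy.1 (hμne k)).const_mul (dd b c ν ρ (k+1) * (2*(k:ℂ)+2))
    rw [show 2*(k:ℂ)+ν+2-1 = 2*(k:ℂ)+ν+1 by ring] at h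
    exact h
  -- outer derivative bounds
  set u2 : ℕ → ℝ := fun k => ‖dd b c ν ρ (k+1)‖ *
      ((2*(k:ℝ)+2) * (((2*(k:ℝ)+2)+‖ν‖) * R^(2*(k:ℝ)+ν.re+1))) with hu2def
  have hgbound : ∀ (k : ℕ) (y : ℝ), y ∈ Ioo (0:ℝ) R → ‖ggk' b c ν ρ k y‖ ≤ u2 k := by
    intro k y hy
    have h2k2 : ‖(2*(k:ℂ)+2)‖ = 2*(k:ℝ)+2 := by
      rw [show (2*(k:ℂ)+2) = (((2*k+2:ℕ)):ℂ) by push_cast; ring, Complex.norm_natCast]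
      push_cast
      ring
    have hμnorm : ‖(2*(k:ℂ)+ν+2)‖ ≤ (2*(k:ℝ)+2)+‖ν‖ := by
      calc ‖(2*(k:ℂ)+ν+2)‖ = ‖(2*(k:ℂ)+2)+ν‖ := by ring_nf
        _ ≤ ‖(2*(k:ℂ)+2)‖ + ‖ν‖ := norm_add_le _ _
        _ = (2*(k:ℝ)+2)+‖ν‖ := by rw [h2k2]
    have hcpownorm : ‖(y:ℂ)^(2*(k:ℂ)+ν+1)‖ ≤ R^(2*(k:ℝ)+ν.re+1) := by
      have hre1 : (2*(k:ℂ)+ν+1).re = 2*(k:ℝ)+ν.re+1 := by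
        simp [Complex.add_re, Complex.mul_re, Complex.natCast_re, Complex.natCast_im]
      rw [Complex.norm_cpow_eq_rpow_re_of_pos hy.1, hre1]
      apply Real.rpow_le_rpow hy.1.le hy.2.le
      have : (0:ℝ) ≤ (k:ℝ) := Nat.cast_nonneg k
      linarith
    have heq : ‖ggk' b c ν ρ k y‖ = ‖dd b c ν ρ (k+1)‖ *
        ((2*(k:ℝ)+2) * (‖(2*(k:ℂ)+ν+2)‖ * ‖(y:ℂ)^(2*(k:ℂ)+ν+1)‖)) := by
      rw [ggk', norm_mul, norm_mul, norm_mul, h2k2]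
      ring
    rw [heq]
    show _ ≤ ‖dd b c ν ρ (k+1)‖ * ((2*(k:ℝ)+2) * (((2*(k:ℝ)+2)+‖ν‖) * R^(2*(k:ℝ)+ν.re+1)))
    apply mul_le_mul_of_nonneg_left _ (norm_nonneg _)
    apply mul_le_mul_of_nonneg_left _ (by positivity)
    exact mul_le_mul hμnorm hcpownorm (norm_nonneg _) (by positivity)
  have hRrpow : ∀ k : ℕ, ∀ s : ℝ, R^(2*(k:ℝ)+s) = R^s * (R^2)^k := by
    intro k s
    rw [show 2*(k:ℝ)+s = s + (2*k:ℕ) by push_cast; ring, Real.rpow_add hR0,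
      Real.rpow_natCast, pow_mul]
  have hu2 : Summable u2 := by
    apply Summable.of_nonneg_of_le
      (f := fun k => ((4*(‖ν‖+2)*R^(ν.re+1))*Cd2) * (WW a' v k * (4*B*R^2)^k))
    · intro k
      have h1 : (0:ℝ) ≤ 2*(k:ℝ)+2 := by positivity
      have h2 : (0:ℝ) ≤ (2*(k:ℝ)+2)+‖ν‖ := by positivity
      have h3 : (0:ℝ) ≤ R^(2*(k:ℝ)+ν.re+1) := Real.rpow_nonneg hR0.le _
      simp only [hu2def]
      have := norm_nonneg (dd b c ν ρ (k+1))
      positivity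
    · intro k
      simp only [hu2def]
      have hp2 := hone2 k
      have hkk := h2pow k
      have b1 : 2*(k:ℝ)+2 ≤ 2*2^k := by linarith
      have b2 : (2*(k:ℝ)+2)+‖ν‖ ≤ (‖ν‖+2)*(2*2^k) := by
        have hn0 : (0:ℝ) ≤ ‖ν‖ := norm_nonneg ν
        nlinarith
      have b3 : R^(2*(k:ℝ)+ν.re+1) = R^(ν.re+1) * (R^2)^k := by
        rw [show 2*(k:ℝ)+ν.re+1 = 2*(k:ℝ)+(ν.re+1) by ring, hRrpow]
      have hWk := (hWpos k).le
      have hrp : (0:ℝ) ≤ R^(ν.re+1) := Real.rpow_nonneg hR0.le _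
      calc ‖dd b c ν ρ (k+1)‖ * ((2*(k:ℝ)+2) * (((2*(k:ℝ)+2)+‖ν‖) * R^(2*(k:ℝ)+ν.re+1)))
          ≤ (Cd2 * (B^k * WW a' v k)) *
            ((2*2^k) * (((‖ν‖+2)*(2*2^k)) * (R^(ν.re+1) * (R^2)^k))) := by
            rw [b3]
            apply mul_le_mul (hdd2 k) _ _ _
            · apply mul_le_mul b1 _ (by positivity) (by positivity)
              apply mul_le_mul b2 le_rfl (by positivity) (by positivity)
            · have h2' : (0:ℝ) ≤ (2*(k:ℝ)+2)+‖ν‖ := by positivity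
              have h3' : (0:ℝ) ≤ R^(ν.re+1) * (R^2)^k := by positivity
              positivity
            · positivity
        _ = ((4*(‖ν‖+2)*R^(ν.re+1))*Cd2) * (WW a' v k * (4*B*R^2)^k) := by
            rw [mul_pow, mul_pow, show (4:ℝ)^k = 2^k*2^k by rw [← mul_pow]; norm_num]
            ring
    · exact (hW (4*B*R^2) (by positivity)).mul_left _
  -- outer value summability at x
  have hS4 : Summable (fun k : ℕ => ggk b c ν ρ k x) := by
    apply Summable.of_norm_bounded (g := fun k => ((2*R^(ν.re+2))*Cd2) * (WW a' v k * (2*B*R^2)^k))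
      ((hW (2*B*R^2) (by positivity)).mul_left _)
    intro k
    rw [ggk]
    rw [norm_mul, norm_mul]
    have h2k2 : ‖(2*(k:ℂ)+2)‖ = 2*(k:ℝ)+2 := by
      rw [show (2*(k:ℂ)+2) = (((2*k+2:ℕ)):ℂ) by push_cast; ring, Complex.norm_natCast]
      push_cast
      ring
    have hxpow : ‖(x:ℂ)^(2*(k:ℂ)+ν+2)‖ ≤ R^(ν.re+2) * (R^2)^k := by
      rw [Complex.norm_cpow_eq_rpow_re_of_pos hx, hrepos k]
      have h1 : x^(2*(k:ℝ)+ν.re+2) ≤ R^(2*(k:ℝ)+ν.re+2) := by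
        apply Real.rpow_le_rpow hx.le hxR.le
        have : (0:ℝ) ≤ (k:ℝ) := Nat.cast_nonneg k
        linarith
      have h2 : R^(2*(k:ℝ)+ν.re+2) = R^(ν.re+2) * (R^2)^k := by
        rw [show 2*(k:ℝ)+ν.re+2 = 2*(k:ℝ)+(ν.re+2) by ring, hRrpow]
      linarith
    have hp2 := hone2 k
    have hkk := h2pow k
    have b1 : 2*(k:ℝ)+2 ≤ 2*2^k := by linarith
    have hrp : (0:ℝ) ≤ R^(ν.re+2) := Real.rpow_nonneg hR0.le _
    have hWk := (hWpos k).le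
    calc ‖dd b c ν ρ (k+1)‖ * ‖(2*(k:ℂ)+2)‖ * ‖(x:ℂ)^(2*(k:ℂ)+ν+2)‖
        ≤ (Cd2 * (B^k * WW a' v k)) * (2*2^k) * (R^(ν.re+2) * (R^2)^k) := by
          apply mul_le_mul _ hxpow (norm_nonneg _) (by positivity)
          apply mul_le_mul (hdd2 k) _ (norm_nonneg _) _
          · rw [h2k2]; exact b1
          · positivity
      _ = ((2*R^(ν.re+2))*Cd2) * (WW a' v k * (2*B*R^2)^k) := by
          rw [mul_pow, mul_pow]
          ring
  -- outer hasDerivAt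
  have hOuterDeriv : HasDerivAt (fun y : ℝ => ∑' k : ℕ, ggk b c ν ρ k y)
      (∑' k : ℕ, ggk' b c ν ρ k x) x :=
    hasDerivAt_tsum_of_isPreconnected hu2 isOpen_Ioo isPreconnected_Ioo
      hgder hgbound hxmem hS4 hxmem
  have hev2 : (fun y : ℝ => (y:ℂ) ^ (ν + 1) *
        deriv (fun w : ℝ => (w:ℂ) ^ (-ν) * unifiedG b (c - 1) ν ρ (w:ℂ)) y)
      =ᶠ[nhds x] (fun y : ℝ => ∑' k : ℕ, ggk b c ν ρ k y) := by
    filter_upwards [Ioo_mem_nhds hx hxR] with y hy using hOuterEq y hy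
  rw [hev2.deriv_eq, hOuterDeriv.deriv]
  rw [unifiedG, ← tsum_mul_left]
  exact tsum_congr fun k => final_term b c ν ρ hc hν hx k
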